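/- Let 𝒮 = 𝒮(S_1,S_2,P,Q,T,φ) be the maximal totally singular subspace of R^3 from Theorem 4.1 (case m-k_1-k_2 even). Then the number of non-zero vectors in 𝒮 of the form σ(a,0,0) with a singular and σ a coordinate permutation is exactly 2^{k_1} + 2^{k_2} - 2. -/

import Mathlib

open QuadraticMap Module Submodule

section
variable {R : Type*} [AddCommGroup R] [Module (ZMod 2) R]

def IsTotallySingular (Q : QuadraticForm (ZMod 2) R) (S : Submodule (ZMod 2) R) : Prop :=
  ∀ x ∈ S, Q x = 0

def QuadNonsingular (Q : QuadraticForm (ZMod 2) R) : Prop :=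
  ∀ a : R, (∀ b : R, polar Q a b = 0) → a = 0

def IsPlusType (Q : QuadraticForm (ZMod 2) R) (m : ℕ) : Prop :=
  (∃ S : Submodule (ZMod 2) R, IsTotallySingular Q S ∧ Module.finrank (ZMod 2) S = m) ∧
  ∀ S : Submodule (ZMod 2) R, IsTotallySingular Q S → Module.finrank (ZMod 2) S ≤ m

def orthComp (Q : QuadraticForm (ZMod 2) R) (A : Submodule (ZMod 2) R) :
    Submodule (ZMod 2) R where
  carrier := {x | ∀ a ∈ A, polar Q x a = 0}
  add_mem' := fun hx hy a ha => by
    rw [polar_add_left, hx a ha, hy a ha, add_zero]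
  zero_mem' := fun a ha => by simp [polar]
  smul_mem' := fun c x hx a ha => by
    rw [polar_smul_left, hx a ha, smul_zero]

def NonsingularOn (Q : QuadraticForm (ZMod 2) R) (A : Submodule (ZMod 2) R) : Prop :=
  ∀ x ∈ A, (∀ y ∈ A, polar Q x y = 0) → x = 0

end

section
variable {R : Type*} [AddCommGroup R] [Module (ZMod 2) R]

/-- The data of the construction 𝒮(S₁,S₂,P,Q,T,φ) of Theorem 4.1 (m - k₁ - k₂ even):
S₁ is a k₁-dimensional totally singular subspace, S₂ ⊆ S₁ is k₂-dimensional,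
P is an (m-k₁-k₂)-dimensional non-singular subspace of S₁^⊥, Q is a complement of S₁ in
(S₁ ⊥ P)^⊥, T is a complement of S₂ in (S₂ ⊥ P)^⊥, and φ : T → U = Q^⊥ is an isomorphism
of quadratic spaces. -/
def EvenConstruction (Q : QuadraticForm (ZMod 2) R) (m k1 k2 : ℕ)
    (S1 S2 P Qs T : Submodule (ZMod 2) R) (φ : R →ₗ[ZMod 2] R) : Prop :=
  IsTotallySingular Q S1 ∧ Module.finrank (ZMod 2) S1 = k1 ∧
  S2 ≤ S1 ∧ Module.finrank (ZMod 2) S2 = k2 ∧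
  k1 + k2 ≤ m ∧ Even (m - k1 - k2) ∧
  P ≤ orthComp Q S1 ∧ NonsingularOn Q P ∧ Module.finrank (ZMod 2) P = m - k1 - k2 ∧
  Disjoint S1 Qs ∧ S1 ⊔ Qs = orthComp Q (S1 ⊔ P) ∧
  Disjoint S2 T ∧ S2 ⊔ T = orthComp Q (S2 ⊔ P) ∧
  (∀ x ∈ T, Q (φ x) = Q x) ∧ Set.InjOn φ (T : Set R) ∧
  Submodule.map φ T = orthComp Q Qs

/-- The subspace 𝒮(S₁,S₂,P,Q,T,φ) of R³. -/
def SpanEven (S1 S2 P Qs T : Submodule (ZMod 2) R) (φ : R →ₗ[ZMod 2] R) :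
    Submodule (ZMod 2) (Fin 3 → R) :=
  Submodule.span (ZMod 2)
    ({w | ∃ s ∈ S1, w = ![s, 0, 0]} ∪ {w | ∃ s ∈ S2, w = ![0, s, 0]} ∪
     {w | ∃ p ∈ P, w = ![p, p, 0]} ∪ {w | ∃ q ∈ Qs, w = ![q, 0, q]} ∪
     {w | ∃ t ∈ T, w = ![0, t, φ t]})

end

section Aux

variable {R : Type*} [AddCommGroup R] [Module (ZMod 2) R]

lemma mem_orthComp {Q : QuadraticForm (ZMod 2) R} {A : Submodule (ZMod 2) R} {x : R} :
    x ∈ orthComp Q A ↔ ∀ a ∈ A, polar Q x a = 0 := Iff.rfl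

/-- The linear parametrization of `SpanEven`. -/
def Fmap (φ : R →ₗ[ZMod 2] R) : (R × R × R × R × R) →ₗ[ZMod 2] (Fin 3 → R) where
  toFun x := ![x.1 + x.2.2.1 + x.2.2.2.1, x.2.1 + x.2.2.1 + x.2.2.2.2,
    x.2.2.2.1 + φ x.2.2.2.2]
  map_add' x y := by
    funext i
    fin_cases i <;> simp <;> abel
  map_smul' c x := by
    funext i
    fin_cases i <;> simp [smul_add]

lemma spanEven_eq (S1 S2 P Qs T : Submodule (ZMod 2) R) (φ : R →ₗ[ZMod 2] R) :
    SpanEven S1 S2 P Qs T φ =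
      Submodule.map (Fmap φ) (S1.prod (S2.prod (P.prod (Qs.prod T)))) := by
  apply le_antisymm
  · rw [SpanEven, span_le]
    rintro w (((((⟨s, hs, rfl⟩ | ⟨s, hs, rfl⟩) | ⟨p, hp, rfl⟩) | ⟨q, hq, rfl⟩) | ⟨t, ht, rfl⟩))
    · exact ⟨(s, 0, 0, 0, 0), ⟨hs, zero_mem _, zero_mem _, zero_mem _, zero_mem _⟩,
        by funext i; fin_cases i <;> simp [Fmap]⟩
    · exact ⟨(0, s, 0, 0, 0), ⟨zero_mem _, hs, zero_mem _, zero_mem _, zero_mem _⟩,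
        by funext i; fin_cases i <;> simp [Fmap]⟩
    · exact ⟨(0, 0, p, 0, 0), ⟨zero_mem _, zero_mem _, hp, zero_mem _, zero_mem _⟩,
        by funext i; fin_cases i <;> simp [Fmap]⟩
    · exact ⟨(0, 0, 0, q, 0), ⟨zero_mem _, zero_mem _, zero_mem _, hq, zero_mem _⟩,
        by funext i; fin_cases i <;> simp [Fmap]⟩
    · exact ⟨(0, 0, 0, 0, t), ⟨zero_mem _, zero_mem _, zero_mem _, zero_mem _, ht⟩,
        by funext i; fin_cases i <;> simp [Fmap]⟩
  · rintro w ⟨⟨a, b, p, q, t⟩, hmem, rfl⟩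
    obtain ⟨ha, hb, hp, hq, ht⟩ := hmem
    have hw : Fmap φ (a, b, p, q, t) =
        ![a, 0, 0] + ![0, b, 0] + ![p, p, 0] + ![q, 0, q] + ![0, t, φ t] := by
      funext i; fin_cases i <;> simp [Fmap] <;> abel
    rw [hw]
    refine add_mem (add_mem (add_mem (add_mem ?_ ?_) ?_) ?_) ?_ <;>
      apply Submodule.subset_span
    · exact Or.inl (Or.inl (Or.inl (Or.inl ⟨a, ha, rfl⟩)))
    · exact Or.inl (Or.inl (Or.inl (Or.inr ⟨b, hb, rfl⟩)))
    · exact Or.inl (Or.inl (Or.inr ⟨p, hp, rfl⟩))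
    · exact Or.inl (Or.inr ⟨q, hq, rfl⟩)
    · exact Or.inr ⟨t, ht, rfl⟩

end Aux

/-- The number of non-zero vectors in 𝒮(S₁,S₂,P,Q,T,φ) supported in a single coordinate
(with that coordinate a non-zero singular vector) is 2^k₁ + 2^k₂ - 2. -/
theorem spanEven_count_single_support {R : Type*} [AddCommGroup R] [Module (ZMod 2) R]
    [FiniteDimensional (ZMod 2) R] (m k1 k2 : ℕ)
    (Q : QuadraticForm (ZMod 2) R) (hdim : Module.finrank (ZMod 2) R = 2 * m)
    (hns : QuadNonsingular Q) (htype : IsPlusType Q m)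
    (S1 S2 P Qs T : Submodule (ZMod 2) R) (φ : R →ₗ[ZMod 2] R)
    (h : EvenConstruction Q m k1 k2 S1 S2 P Qs T φ) :
    Nat.card {v : Fin 3 → R | v ∈ SpanEven S1 S2 P Qs T φ ∧
      ∃ i : Fin 3, v i ≠ 0 ∧ Q (v i) = 0 ∧ ∀ j : Fin 3, j ≠ i → v j = 0} =
    2 ^ k1 + 2 ^ k2 - 2 := by
  obtain ⟨hS1, hk1, hS21, hk2, -, -, hPorth, hPns, -, hdisjQ, hsupQ, hdisjT, hsupT,
    hφQ, hφinj, hφmap⟩ := h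
  have hfinR : Finite R := Module.finite_of_finite (ZMod 2)
  -- key: an element of P orthogonal to some W ⊔ P is zero
  have key : ∀ p ∈ P, ∀ W : Submodule (ZMod 2) R, p ∈ orthComp Q (W ⊔ P) → p = 0 := by
    intro p hp W hporth
    exact hPns p hp fun y hy => mem_orthComp.mp hporth y (Submodule.mem_sup_right hy)
  have hset : {v : Fin 3 → R | v ∈ SpanEven S1 S2 P Qs T φ ∧
      ∃ i : Fin 3, v i ≠ 0 ∧ Q (v i) = 0 ∧ ∀ j : Fin 3, j ≠ i → v j = 0} =
      (fun s : R => ![s, 0, 0]) '' ((S1 : Set R) \ {0}) ∪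
      (fun s : R => ![0, s, 0]) '' ((S2 : Set R) \ {0}) := by
    ext v
    constructor
    · rintro ⟨hv, i, hvi, hQvi, hz⟩
      rw [spanEven_eq] at hv
      obtain ⟨⟨a, b, p, q, t⟩, ⟨ha, hb, hp, hq, ht⟩, rfl⟩ := hv
      have hv0 : Fmap φ (a, b, p, q, t) 0 = a + p + q := by simp [Fmap]
      have hv1 : Fmap φ (a, b, p, q, t) 1 = b + p + t := by simp [Fmap]
      have hv2 : Fmap φ (a, b, p, q, t) 2 = q + φ t := by simp [Fmap]
      -- consequences of first coordinate vanishing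
      have case0 : a + p + q = 0 → a = 0 ∧ p = 0 ∧ q = 0 := by
        intro h0
        have hp0 : p = 0 := by
          refine key p hp S1 ?_
          rw [← hsupQ]
          have : p = -(a + q) := by linear_combination (norm := abel) h0
          rw [this]
          exact neg_mem (add_mem (Submodule.mem_sup_left ha) (Submodule.mem_sup_right hq))
        have haq : a = -q := by
          rw [hp0] at h0; linear_combination (norm := abel) h0
        have ha0 : a = 0 := by
          have : a ∈ S1 ⊓ Qs := ⟨ha, haq ▸ neg_mem hq⟩
          simpa using hdisjQ.le_bot this
        refine ⟨ha0, hp0, ?_⟩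
        rw [ha0] at haq; simpa using haq.symm
      -- consequences of second coordinate vanishing
      have case1 : b + p + t = 0 → b = 0 ∧ p = 0 ∧ t = 0 := by
        intro h1
        have hp0 : p = 0 := by
          refine key p hp S2 ?_
          rw [← hsupT]
          have : p = -(b + t) := by linear_combination (norm := abel) h1
          rw [this]
          exact neg_mem (add_mem (Submodule.mem_sup_left hb) (Submodule.mem_sup_right ht))
        have hbt : b = -t := by
          rw [hp0] at h1; linear_combination (norm := abel) h1
        have hb0 : b = 0 := by
          have : b ∈ S2 ⊓ T := ⟨hb, hbt ▸ neg_mem ht⟩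
          simpa using hdisjT.le_bot this
        refine ⟨hb0, hp0, ?_⟩
        rw [hb0] at hbt; simpa using hbt.symm
      fin_cases i
      · -- i = 0
        have h1 := hz 1 (by decide)
        have h2 := hz 2 (by decide)
        rw [hv1] at h1
        rw [hv2] at h2
        obtain ⟨hb0, hp0, ht0⟩ := case1 h1
        have hq0 : q = 0 := by
          rw [ht0] at h2; simpa using h2
        refine Or.inl ⟨a, ⟨ha, ?_⟩, ?_⟩
        · simp only [Set.mem_singleton_iff]
          intro ha0
          apply hvi
          show Fmap φ (a, b, p, q, t) 0 = 0
          rw [hv0, ha0, hp0, hq0]; simp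
        · subst hb0 hp0 hq0 ht0
          funext j; fin_cases j <;> simp [Fmap]
      · -- i = 1
        have h0 := hz 0 (by decide)
        have h2 := hz 2 (by decide)
        rw [hv0] at h0
        rw [hv2] at h2
        obtain ⟨ha0, hp0, hq0⟩ := case0 h0
        have ht0 : t = 0 := by
          apply hφinj ht (zero_mem T)
          rw [hq0] at h2
          simpa using h2
        refine Or.inr ⟨b, ⟨hb, ?_⟩, ?_⟩
        · simp only [Set.mem_singleton_iff]
          intro hb0
          apply hvi
          show Fmap φ (a, b, p, q, t) 1 = 0
          rw [hv1, hb0, hp0, ht0]; simp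
        · subst ha0 hp0 hq0 ht0
          funext j; fin_cases j <;> simp [Fmap]
      · -- i = 2 : impossible
        exfalso
        have h0 := hz 0 (by decide)
        have h1 := hz 1 (by decide)
        rw [hv0] at h0
        rw [hv1] at h1
        obtain ⟨ha0, hp0, hq0⟩ := case0 h0
        obtain ⟨hb0, -, ht0⟩ := case1 h1
        apply hvi
        show Fmap φ (a, b, p, q, t) 2 = 0
        rw [hv2, hq0, ht0]; simp
    · rintro (⟨s, ⟨hs, hs0⟩, rfl⟩ | ⟨s, ⟨hs, hs0⟩, rfl⟩)
      · simp only [Set.mem_singleton_iff] at hs0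
        refine ⟨Submodule.subset_span (Or.inl (Or.inl (Or.inl (Or.inl ⟨s, hs, rfl⟩)))),
          0, by simpa using hs0, by simpa using hS1 s hs, ?_⟩
        intro j hj
        fin_cases j
        · exact absurd rfl hj
        · rfl
        · rfl
      · simp only [Set.mem_singleton_iff] at hs0
        refine ⟨Submodule.subset_span (Or.inl (Or.inl (Or.inl (Or.inr ⟨s, hs, rfl⟩)))),
          1, by simpa using hs0, by simpa using hS1 s (hS21 hs), ?_⟩
        intro j hj
        fin_cases j
        · rfl
        · exact absurd rfl hj
        · rfl
  rw [hset]
  have hinj1 : Function.Injective (fun s : R => ![s, 0, 0]) := by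
    intro x y hxy
    simpa using congrFun hxy 0
  have hinj2 : Function.Injective (fun s : R => ![0, s, 0]) := by
    intro x y hxy
    simpa using congrFun hxy 1
  have hd : Disjoint ((fun s : R => ![s, 0, 0]) '' ((S1 : Set R) \ {0}))
      ((fun s : R => ![0, s, 0]) '' ((S2 : Set R) \ {0})) := by
    rw [Set.disjoint_left]
    rintro v ⟨s, ⟨-, hs0⟩, rfl⟩ ⟨u, ⟨-, -⟩, huv⟩
    apply hs0
    simpa using (congrFun huv 0).symm
  have cardS : ∀ S : Submodule (ZMod 2) R,
      (S : Set R).ncard = 2 ^ Module.finrank (ZMod 2) S := by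
    intro S
    have : Fintype S := Fintype.ofFinite _
    rw [← Nat.card_coe_set_eq, SetLike.coe_sort_coe, Nat.card_eq_fintype_card,
      Module.card_eq_pow_finrank (K := ZMod 2), ZMod.card]
  have card1 : ((S1 : Set R) \ {0}).ncard = 2 ^ k1 - 1 := by
    rw [Set.ncard_diff_singleton_of_mem (Submodule.zero_mem S1),
      cardS, hk1]
  have card2 : ((S2 : Set R) \ {0}).ncard = 2 ^ k2 - 1 := by
    rw [Set.ncard_diff_singleton_of_mem (Submodule.zero_mem S2),
      cardS, hk2]
  rw [Nat.card_coe_set_eq, Set.ncard_union_eq hd (Set.toFinite _) (Set.toFinite _),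
    Set.ncard_image_of_injective _ hinj1, Set.ncard_image_of_injective _ hinj2,
    card1, card2]
  have h1 : 1 ≤ 2 ^ k1 := Nat.one_le_two_pow
  have h2 : 1 ≤ 2 ^ k2 := Nat.one_le_two_pow
  omega
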